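/- Let G₀ = N₀ ⋊ ℤ where ℤ acts on N₀ by shifting indices (t a_i t⁻¹ = a_{i+1}, t c_i t⁻¹ = c_i), generated by S = {t, a_0}. If g ∈ N₀ and the word norm ‖g‖_S ≤ n, then g lies in the subgroup generated by S_n = {a_i : |i| ≤ n} and ‖g‖_{S_n} ≤ n. -/

import Mathlib

/-- Generators of Hall's group `G₀`: the shift `t`, and `a i`, `c i` for `i : ℤ`. -/
inductive Gen where
  | t : Gen
  | a : ℤ → Gen
  | c : ℤ → Gen

/-- The commutator convention of the paper: `[x, y] = x⁻¹y⁻¹xy`. -/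
def pcomm {G : Type*} [Group G] (x y : G) : G := x⁻¹ * y⁻¹ * x * y

/-- The relations of Hall's group `G₀ = N₀ ⋊ ℤ`: `t (a i) t⁻¹ = a (i+1)`,
`t (c i) t⁻¹ = c i`, `[a i, a j] = c (i - j)`, and the `c i` are central in `N₀`. -/
def rels : Set (FreeGroup Gen) :=
  (Set.range fun i : ℤ =>
    FreeGroup.of Gen.t * FreeGroup.of (Gen.a i) * (FreeGroup.of Gen.t)⁻¹ *
      (FreeGroup.of (Gen.a (i + 1)))⁻¹) ∪
  (Set.range fun i : ℤ =>
    FreeGroup.of Gen.t * FreeGroup.of (Gen.c i) * (FreeGroup.of Gen.t)⁻¹ *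
      (FreeGroup.of (Gen.c i))⁻¹) ∪
  (Set.range fun p : ℤ × ℤ =>
    pcomm (FreeGroup.of (Gen.a p.1)) (FreeGroup.of (Gen.a p.2)) *
      (FreeGroup.of (Gen.c (p.1 - p.2)))⁻¹) ∪
  (Set.range fun p : ℤ × ℤ =>
    pcomm (FreeGroup.of (Gen.c p.1)) (FreeGroup.of (Gen.a p.2))) ∪
  (Set.range fun p : ℤ × ℤ =>
    pcomm (FreeGroup.of (Gen.c p.1)) (FreeGroup.of (Gen.c p.2)))

/-- Hall's group `G₀`. -/
abbrev G₀ := PresentedGroup rels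

/-- The image of `t` in `G₀`. -/
def tElt : G₀ := PresentedGroup.of Gen.t
/-- The image of `a i` in `G₀`. -/
def aElt (i : ℤ) : G₀ := PresentedGroup.of (Gen.a i)
/-- The image of `c i` in `G₀`. -/
def cElt (i : ℤ) : G₀ := PresentedGroup.of (Gen.c i)

/-- helper: relator images are trivial -/
lemma rel_one {r : FreeGroup Gen} (h : r ∈ rels) : PresentedGroup.mk rels r = 1 := by
  exact (QuotientGroup.eq_one_iff _).mpr (Subgroup.subset_normalClosure h)

lemma ta_rel (i : ℤ) : tElt * aElt i * tElt⁻¹ = aElt (i + 1) := by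
  have h : PresentedGroup.mk rels
      (FreeGroup.of Gen.t * FreeGroup.of (Gen.a i) * (FreeGroup.of Gen.t)⁻¹ *
        (FreeGroup.of (Gen.a (i + 1)))⁻¹) = 1 :=
    rel_one (Or.inl (Or.inl (Or.inl (Or.inl ⟨i, rfl⟩))))
  simp only [map_mul, map_inv] at h
  have : tElt * aElt i * tElt⁻¹ * (aElt (i+1))⁻¹ = 1 := h
  group at this ⊢
  exact mul_inv_eq_one.mp this

lemma conj_a (k : ℤ) : ∀ i : ℤ, tElt ^ k * aElt i * (tElt ^ k)⁻¹ = aElt (i + k) := by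
  induction k using Int.induction_on with
  | zero => intro i; simp
  | succ m ih =>
    intro i
    have : tElt ^ ((m : ℤ) + 1) = tElt ^ (m : ℤ) * tElt := by
      rw [zpow_add_one]
    rw [this, mul_inv_rev]
    calc tElt ^ (m:ℤ) * tElt * aElt i * (tElt⁻¹ * (tElt ^ (m:ℤ))⁻¹)
        = tElt ^ (m:ℤ) * (tElt * aElt i * tElt⁻¹) * (tElt ^ (m:ℤ))⁻¹ := by group
      _ = tElt ^ (m:ℤ) * aElt (i+1) * (tElt ^ (m:ℤ))⁻¹ := by rw [ta_rel]
      _ = aElt (i + 1 + m) := ih (i + 1)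
      _ = aElt (i + (m + 1)) := by ring_nf
  | pred m ih =>
    intro i
    have ht : tElt ^ (-(m : ℤ) - 1) = tElt ^ (-(m : ℤ)) * tElt⁻¹ := by
      rw [zpow_sub_one]
    have hstep : tElt⁻¹ * aElt i * tElt = aElt (i - 1) := by
      have := ta_rel (i - 1)
      rw [sub_add_cancel] at this
      rw [← this]; group
    rw [ht, mul_inv_rev]
    calc tElt ^ (-(m:ℤ)) * tElt⁻¹ * aElt i * (tElt⁻¹⁻¹ * (tElt ^ (-(m:ℤ)))⁻¹)
        = tElt ^ (-(m:ℤ)) * (tElt⁻¹ * aElt i * tElt) * (tElt ^ (-(m:ℤ)))⁻¹ := by group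
      _ = tElt ^ (-(m:ℤ)) * aElt (i - 1) * (tElt ^ (-(m:ℤ)))⁻¹ := by rw [hstep]
      _ = aElt (i - 1 + (-m)) := ih (i - 1)
      _ = aElt (i + (-m - 1)) := by ring_nf

lemma tk_mul_a (k : ℤ) : tElt ^ k * aElt 0 = aElt k * tElt ^ k := by
  have := conj_a k 0
  rw [zero_add] at this
  rw [← this]; group

lemma tk_mul_a_inv (k : ℤ) : tElt ^ k * (aElt 0)⁻¹ = (aElt k)⁻¹ * tElt ^ k := by
  have h := tk_mul_a k
  have h2 : (aElt 0)⁻¹ * (tElt ^ k)⁻¹ = (tElt ^ k)⁻¹ * (aElt k)⁻¹ := by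
    rw [← mul_inv_rev, ← mul_inv_rev, h]
  calc tElt ^ k * (aElt 0)⁻¹
      = tElt ^ k * ((aElt 0)⁻¹ * (tElt ^ k)⁻¹) * tElt ^ k := by group
    _ = tElt ^ k * ((tElt ^ k)⁻¹ * (aElt k)⁻¹) * tElt ^ k := by rw [h2]
    _ = (aElt k)⁻¹ * tElt ^ k := by group

/-- the exponent-sum homomorphism `G₀ → ℤ` (multiplicative). -/
noncomputable def expHom : G₀ →* Multiplicative ℤ :=
  PresentedGroup.toGroup (f := fun x => match x with
    | Gen.t => Multiplicative.ofAdd 1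
    | Gen.a _ => 1
    | Gen.c _ => 1) (by
      rintro r (((( ⟨i, rfl⟩ | ⟨i, rfl⟩) | ⟨p, rfl⟩) | ⟨p, rfl⟩) | ⟨p, rfl⟩) <;>
        simp [pcomm])

lemma expHom_t : expHom tElt = Multiplicative.ofAdd 1 := by
  simp [expHom, tElt, PresentedGroup.toGroup.of]

lemma expHom_a (i : ℤ) : expHom (aElt i) = 1 := by
  simp [expHom, aElt, PresentedGroup.toGroup.of]

lemma expHom_c (i : ℤ) : expHom (cElt i) = 1 := by
  simp [expHom, cElt, PresentedGroup.toGroup.of]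

lemma key (L : List G₀)
    (hL : ∀ x ∈ L, x = tElt ∨ x = tElt⁻¹ ∨ x = aElt 0 ∨ x = (aElt 0)⁻¹) :
    ∃ (k : ℤ) (M : List G₀), M.length + k.natAbs ≤ L.length ∧
      (∀ x ∈ M, ∃ i : ℤ, i.natAbs ≤ L.length ∧ (x = aElt i ∨ x = (aElt i)⁻¹)) ∧
      L.prod = M.prod * tElt ^ k := by
  induction L using List.reverseRecOn with
  | nil => exact ⟨0, [], by simp, by simp, by simp⟩
  | append_singleton L x ih =>
    obtain ⟨k, M, hlen, hmem, hprod⟩ := ih (fun y hy => hL y (by simp [hy]))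
    have hx := hL x (by simp)
    have hlenL : L.length + 1 = (L ++ [x]).length := by simp
    rcases hx with rfl | rfl | rfl | rfl
    · refine ⟨k + 1, M, ?_, ?_, ?_⟩
      · simp only [List.length_append, List.length_singleton]; omega
      · intro y hy; obtain ⟨i, hi, h'⟩ := hmem y hy
        exact ⟨i, by simp; omega, h'⟩
      · rw [List.prod_append, List.prod_singleton, hprod, mul_assoc, ← zpow_add_one]
    · refine ⟨k - 1, M, ?_, ?_, ?_⟩
      · simp only [List.length_append, List.length_singleton]; omega
      · intro y hy; obtain ⟨i, hi, h'⟩ := hmem y hy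
        exact ⟨i, by simp; omega, h'⟩
      · rw [List.prod_append, List.prod_singleton, hprod, mul_assoc, ← zpow_sub_one]
    · refine ⟨k, M ++ [aElt k], ?_, ?_, ?_⟩
      · simp only [List.length_append, List.length_singleton]; omega
      · intro y hy
        rcases List.mem_append.mp hy with hy | hy
        · obtain ⟨i, hi, h'⟩ := hmem y hy
          exact ⟨i, by simp; omega, h'⟩
        · rw [List.mem_singleton] at hy
          exact ⟨k, by simp; omega, Or.inl hy⟩
      · rw [List.prod_append, List.prod_singleton, hprod, List.prod_append,
          List.prod_singleton, mul_assoc, tk_mul_a, mul_assoc]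
    · refine ⟨k, M ++ [(aElt k)⁻¹], ?_, ?_, ?_⟩
      · simp only [List.length_append, List.length_singleton]; omega
      · intro y hy
        rcases List.mem_append.mp hy with hy | hy
        · obtain ⟨i, hi, h'⟩ := hmem y hy
          exact ⟨i, by simp; omega, h'⟩
        · rw [List.mem_singleton] at hy
          exact ⟨k, by simp; omega, Or.inr hy⟩
      · rw [List.prod_append, List.prod_singleton, hprod, List.prod_append,
          List.prod_singleton, mul_assoc, tk_mul_a_inv, mul_assoc]

/-- If `g` lies in `N₀ ≤ G₀` and has word norm at most `n` with respect
to `S = {t, a 0}`, then `g` lies in the subgroup generated by `S_n = {a i : |i| ≤ n}` and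
has word norm at most `n` with respect to `S_n`. -/
theorem stmt_1 (n : ℕ) (g : G₀)
    (hgN : g ∈ Subgroup.closure {x : G₀ | ∃ i : ℤ, x = aElt i ∨ x = cElt i})
    (hnorm : ∃ L : List G₀, L.length ≤ n ∧
      (∀ x ∈ L, x = tElt ∨ x = tElt⁻¹ ∨ x = aElt 0 ∨ x = (aElt 0)⁻¹) ∧ L.prod = g) :
    g ∈ Subgroup.closure {x : G₀ | ∃ i : ℤ, |i| ≤ (n : ℤ) ∧ x = aElt i} ∧
    ∃ L : List G₀, L.length ≤ n ∧
      (∀ x ∈ L, ∃ i : ℤ, |i| ≤ (n : ℤ) ∧ (x = aElt i ∨ x = (aElt i)⁻¹)) ∧ L.prod = g := by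
  obtain ⟨L, hLn, hLmem, hLprod⟩ := hnorm
  obtain ⟨k, M, hlen, hmem, hprod⟩ := key L hLmem
  -- expHom g = 1
  have hg1 : expHom g = 1 := by
    have hsub : Subgroup.closure {x : G₀ | ∃ i : ℤ, x = aElt i ∨ x = cElt i} ≤ expHom.ker := by
      rw [Subgroup.closure_le]
      rintro x ⟨i, rfl | rfl⟩
      · exact expHom_a i
      · exact expHom_c i
    exact hsub hgN
  have hM1 : expHom M.prod = 1 := by
    rw [map_list_prod]
    apply List.prod_eq_one
    intro y hy
    obtain ⟨z, hz, rfl⟩ := List.mem_map.mp hy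
    obtain ⟨i, _, rfl | rfl⟩ := hmem z hz
    · exact expHom_a i
    · rw [map_inv, expHom_a, inv_one]
  have hk0 : k = 0 := by
    have : expHom (L.prod) = expHom M.prod * (expHom tElt) ^ k := by
      rw [hprod, map_mul, map_zpow]
    rw [hLprod, hg1, hM1, one_mul, expHom_t] at this
    have h2 : (Multiplicative.ofAdd (1:ℤ)) ^ k = Multiplicative.ofAdd k := by
      simp [← ofAdd_zsmul]
    rw [h2] at this
    have := congrArg Multiplicative.toAdd this.symm
    simpa using this
  have hgM : g = M.prod := by
    rw [← hLprod, hprod, hk0, zpow_zero, mul_one]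
  have hMn : M.length ≤ n := by omega
  have hind : ∀ x ∈ M, ∃ i : ℤ, |i| ≤ (n : ℤ) ∧ (x = aElt i ∨ x = (aElt i)⁻¹) := by
    intro x hx
    obtain ⟨i, hi, h'⟩ := hmem x hx
    exact ⟨i, by rw [Int.abs_eq_natAbs]; omega, h'⟩
  constructor
  · rw [hgM]
    apply Subgroup.list_prod_mem
    intro x hx
    obtain ⟨i, hi, rfl | rfl⟩ := hind x hx
    · exact Subgroup.subset_closure ⟨i, hi, rfl⟩
    · exact Subgroup.inv_mem _ (Subgroup.subset_closure ⟨i, hi, rfl⟩)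
  · exact ⟨M, hMn, hind, hgM.symm⟩
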